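/- Let A ≥ e^{e²} be real, let w = A²⁵, U = ∏_{p ≤ w} p (product over primes) and W = 2U. Let a, q, r be integers with q > 0, gcd(a, q) = 1 and gcd(r, W) = 1. If q does not divide 2W and every prime divisor of q is ≤ w, then V_q(a, r) = 0. -/

import Mathlib

open Finset

/-- `e(x) = exp(2πix)`. -/
noncomputable def eF (x : ℝ) : ℂ := Complex.exp (2 * Real.pi * Complex.I * x)

/-- `V_q(a, r) = ∑_{0 ≤ m < q, gcd(r + mW, qW) = 1} e(a (r + mW)² / q)`. -/
noncomputable def Vqar (q W : ℕ) (a r : ℤ) : ℂ :=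
  ∑ m ∈ Finset.range q,
    if Int.gcd (r + (m : ℤ) * W) ((q : ℤ) * W) = 1 then
      eF (((a * (r + (m : ℤ) * W) ^ 2 : ℤ) : ℝ) / (q : ℝ)) else 0

lemma eF_add (x y : ℝ) : eF (x + y) = eF x * eF y := by
  unfold eF
  rw [← Complex.exp_add]
  push_cast
  ring_nf

lemma eF_int (n : ℤ) : eF n = 1 := by
  unfold eF
  rw [mul_comm]
  exact_mod_cast Complex.exp_int_mul_two_pi_mul_I n

lemma eF_add_int (x : ℝ) (n : ℤ) : eF (x + n) = eF x := by
  rw [eF_add, eF_int, mul_one]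

lemma eF_ne_one {D : ℤ} {q : ℕ} (hq : 0 < q) (h : ¬ (q:ℤ) ∣ D) :
    eF ((D:ℝ)/q) ≠ 1 := by
  intro h1
  unfold eF at h1
  rw [Complex.exp_eq_one_iff] at h1
  obtain ⟨n, hn⟩ := h1
  apply h
  have hq0 : (q:ℝ) ≠ 0 := Nat.cast_ne_zero.mpr hq.ne'
  have h2 : ((2:ℂ) * (Real.pi:ℂ) * Complex.I) ≠ 0 := by
    simp [Real.pi_ne_zero, Complex.I_ne_zero]
  have hDq : ((((D:ℝ)/q : ℝ)):ℂ) = (n:ℂ) := by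
    have : (2 * (Real.pi:ℂ) * Complex.I) * (((D:ℝ)/q : ℝ):ℂ)
        = (2 * (Real.pi:ℂ) * Complex.I) * (n:ℂ) := by
      rw [hn]; ring
    exact mul_left_cancel₀ h2 this
  have hDq' : (D:ℝ)/q = (n:ℝ) := by exact_mod_cast hDq
  have hDr : (D:ℝ) = (n:ℝ) * q := by
    field_simp at hDq'
    linarith [hDq']
  have hDz : D = n * q := by exact_mod_cast hDr
  exact ⟨n, by linarith [hDz]⟩

/-- shifting a sum of a `q`-periodic function. -/
lemma sum_range_shift (f : ℕ → ℂ) (q : ℕ) (hper : ∀ m, f (m + q) = f m) (t : ℕ) :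
    ∑ m ∈ Finset.range q, f (m + t) = ∑ m ∈ Finset.range q, f m := by
  induction t with
  | zero => simp
  | succ t ih =>
    have step : ∑ m ∈ Finset.range q, f (m + (t+1)) = ∑ m ∈ Finset.range q, f (m + t) := by
      have h1 : ∑ m ∈ Finset.range (q+1), f (m + t) =
          ∑ m ∈ Finset.range q, f ((m+1) + t) + f (0 + t) := Finset.sum_range_succ' _ _
      have h2 : ∑ m ∈ Finset.range (q+1), f (m + t) =
          ∑ m ∈ Finset.range q, f (m + t) + f (q + t) := Finset.sum_range_succ _ _
      have h3 : f (q + t) = f (0 + t) := by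
        have := hper t
        simpa [Nat.add_comm] using this
      rw [h2, h3] at h1
      have h5 := add_right_cancel h1.symm
      calc ∑ m ∈ Finset.range q, f (m + (t+1))
          = ∑ m ∈ Finset.range q, f ((m+1) + t) := by
            apply Finset.sum_congr rfl; intro m _; congr 1; ring
        _ = ∑ m ∈ Finset.range q, f (m + t) := h5
    rw [step, ih]

/-- The engine: a shift `t` with the right divisibility properties kills `V`. -/
lemma Vqar_eq_zero_of (q W : ℕ) (hq : 0 < q) (a r : ℤ)
    (hgcd : ∀ m : ℕ, Int.gcd (r + (m:ℤ) * W) ((q:ℤ) * W) = 1)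
    (t : ℕ) (hS : (q:ℤ) ∣ 2*a*t*W^2)
    (hD : ¬ (q:ℤ) ∣ 2*a*t*W*r + a*(t:ℤ)^2*(W:ℤ)^2) :
    Vqar q W a r = 0 := by
  set f : ℕ → ℂ := fun m => eF (((a * (r + (m:ℤ)*W)^2 : ℤ) : ℝ) / q) with hf
  have hq0 : (q:ℝ) ≠ 0 := Nat.cast_ne_zero.mpr hq.ne'
  have hVf : Vqar q W a r = ∑ m ∈ Finset.range q, f m := by
    unfold Vqar
    exact Finset.sum_congr rfl fun m _ => if_pos (hgcd m)
  set D : ℤ := 2*a*t*W*r + a*(t:ℤ)^2*(W:ℤ)^2 with hDdef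
  obtain ⟨s, hs⟩ := hS
  -- periodicity
  have hper : ∀ m, f (m + q) = f m := by
    intro m
    have hsplit : (((a * (r + ((m+q:ℕ):ℤ)*W)^2 : ℤ) : ℝ)) / q =
        ((a * (r + (m:ℤ)*W)^2 : ℤ):ℝ)/q + ((2*a*W*r + 2*a*m*W^2 + a*q*W^2 : ℤ):ℝ) := by
      field_simp
      push_cast
      ring
    simp only [hf]
    rw [hsplit, eF_add_int]
  -- key shift identity
  have key : ∀ m : ℕ, f (m + t) = eF ((D:ℝ)/q) * f m := by
    intro m
    have hsplit : (((a * (r + ((m+t:ℕ):ℤ)*W)^2 : ℤ) : ℝ)) / q =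
        ((a * (r + (m:ℤ)*W)^2 : ℤ):ℝ)/q + ((D:ℝ)/q + ((s*m : ℤ):ℝ)) := by
      have hidz : (a * (r + ((m+t:ℕ):ℤ)*W)^2 : ℤ) =
          a * (r + (m:ℤ)*W)^2 + D + (2*a*t*W^2) * m := by
        rw [hDdef]; push_cast; ring
      rw [hidz, hs]
      field_simp
      push_cast
      ring
    simp only [hf]
    rw [hsplit, ← add_assoc]
    rw [eF_add_int, eF_add]
    ring
  have hshift : ∑ m ∈ Finset.range q, f (m + t) = ∑ m ∈ Finset.range q, f m :=
    sum_range_shift f q hper t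
  have hmul : ∑ m ∈ Finset.range q, f (m + t)
      = eF ((D:ℝ)/q) * ∑ m ∈ Finset.range q, f m := by
    rw [Finset.mul_sum]
    exact Finset.sum_congr rfl fun m _ => key m
  have hne : eF ((D:ℝ)/q) ≠ 1 := eF_ne_one hq hD
  have : (eF ((D:ℝ)/q) - 1) * ∑ m ∈ Finset.range q, f m = 0 := by
    rw [sub_mul, one_mul, ← hmul, hshift, sub_self]
  rcases mul_eq_zero.mp this with h | h
  · exact absurd (by linear_combination h : eF ((D:ℝ)/q) = 1) hne
  · rw [hVf, h]

/-- vanishing of `V_q(a,r)` for smooth `q` not dividing `2W`. -/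
theorem stmt_10 (A : ℝ) (hA : A ≥ Real.exp (Real.exp 2)) (U W : ℕ)
    (hU : U = (∏ p ∈ (Finset.range (⌊A ^ 25⌋₊ + 1)).filter
        (fun p : ℕ => p.Prime ∧ (p : ℝ) ≤ A ^ 25), p))
    (hW : W = 2 * U)
    (q : ℕ) (hq : 0 < q) (a r : ℤ)
    (haq : Int.gcd a (q : ℤ) = 1) (hrW : Int.gcd r (W : ℤ) = 1)
    (hndvd : ¬ q ∣ 2 * W)
    (hsmooth : ∀ p : ℕ, p.Prime → p ∣ q → (p : ℝ) ≤ A ^ 25) :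
    Vqar q W a r = 0 := by
  set s : Finset ℕ := (Finset.range (⌊A ^ 25⌋₊ + 1)).filter
      (fun p : ℕ => p.Prime ∧ (p : ℝ) ≤ A ^ 25) with hs
  -- basic bounds on A
  have hA1 : (1:ℝ) ≤ A := le_trans (Real.one_le_exp (Real.exp_nonneg 2)) hA
  have hA2 : (2:ℝ) ≤ A := by
    have h1 : (1:ℝ) ≤ Real.exp 2 := Real.one_le_exp (by norm_num)
    have h2 : Real.exp 1 ≤ Real.exp (Real.exp 2) := Real.exp_le_exp.mpr h1
    have h3 : (2:ℝ) ≤ Real.exp 1 := by linarith [Real.add_one_le_exp 1]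
    linarith
  have hAA : A ≤ A^25 := le_self_pow₀ hA1 (by norm_num)
  -- membership lemma
  have hpU : ∀ p : ℕ, p.Prime → (p:ℝ) ≤ A^25 → p ∣ U := by
    intro p pp hple
    rw [hU]
    apply Finset.dvd_prod_of_mem
    rw [hs, Finset.mem_filter, Finset.mem_range]
    exact ⟨Nat.lt_succ_of_le (Nat.le_floor hple), pp, hple⟩
  have h2U : 2 ∣ U := hpU 2 Nat.prime_two (by push_cast; linarith)
  have hpW : ∀ p : ℕ, p.Prime → p ∣ q → p ∣ W := by
    intro p pp hpq
    rw [hW]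
    exact Dvd.dvd.mul_left (hpU p pp (hsmooth p pp hpq)) 2
  have hUpos : 0 < U := by
    rw [hU]
    apply Finset.prod_pos
    intro i hi
    exact ((Finset.mem_filter.mp hi).2.1).pos
  have hWpos : 0 < W := by rw [hW]; positivity
  -- Step 1: the gcd condition always holds
  have hgcd : ∀ m : ℕ, Int.gcd (r + (m:ℤ) * W) ((q:ℤ) * W) = 1 := by
    intro m
    have hrW' : IsCoprime r (W:ℤ) := Int.isCoprime_iff_gcd_eq_one.mpr hrW
    have hnW : IsCoprime (r + (m:ℤ)*W) (W:ℤ) := hrW'.add_mul_right_left (m:ℤ)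
    have hnq : IsCoprime (r + (m:ℤ)*W) (q:ℤ) := by
      rw [Int.isCoprime_iff_gcd_eq_one]
      by_contra hne
      obtain ⟨p, pp, hpd⟩ := Nat.exists_prime_and_dvd hne
      have hpdz : (p:ℤ) ∣ (Int.gcd (r + (m:ℤ)*W) (q:ℤ) : ℤ) := Int.natCast_dvd_natCast.mpr hpd
      have hpn : (p:ℤ) ∣ (r + (m:ℤ)*W) := hpdz.trans (Int.gcd_dvd_left _ _)
      have hpqz : (p:ℤ) ∣ (q:ℤ) := hpdz.trans (Int.gcd_dvd_right _ _)
      have hpq : p ∣ q := Int.natCast_dvd_natCast.mp hpqz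
      have hpWn : p ∣ W := hpW p pp hpq
      obtain ⟨u, v, huv⟩ := hnW
      have hp1 : (p:ℤ) ∣ 1 := by
        rw [← huv]
        exact dvd_add (hpn.mul_left u) ((Int.natCast_dvd_natCast.mpr hpWn).mul_left v)
      have : p ∣ 1 := Int.natCast_dvd_natCast.mp (by exact_mod_cast hp1)
      exact absurd (Nat.dvd_one.mp this) pp.one_lt.ne'
    exact Int.isCoprime_iff_gcd_eq_one.mp (hnq.mul_right hnW)
  -- Step 2: find a prime p with large multiplicity in q
  have hq0 : q ≠ 0 := hq.ne'
  have h2W0 : 2 * W ≠ 0 := by positivity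
  have hex : ∃ p : ℕ, (2*W).factorization p < q.factorization p := by
    by_contra hno
    push_neg at hno
    exact hndvd ((Nat.factorization_le_iff_dvd hq0 h2W0).mp (Finsupp.le_def.mpr hno))
  obtain ⟨p, hplt⟩ := hex
  have hpp : p.Prime := by
    by_contra hnp
    rw [Nat.factorization_eq_zero_of_not_prime q hnp] at hplt
    omega
  have hpq : p ∣ q := Nat.dvd_of_factorization_pos (by omega)
  have hpUdvd : p ∣ U := hpU p hpp (hsmooth p hpp hpq)
  have hpss : p ∈ s := by
    rw [hs, Finset.mem_filter, Finset.mem_range]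
    exact ⟨Nat.lt_succ_of_le (Nat.le_floor (hsmooth p hpp hpq)), hpp, hsmooth p hpp hpq⟩
  -- U = p * U₁ with p ∤ U₁
  set U₁ : ℕ := ∏ x ∈ s.erase p, x with hU₁
  have hUsplit : U = p * U₁ := by
    rw [hU, hU₁]
    exact (Finset.mul_prod_erase s (fun x => x) hpss).symm
  have hpU₁ : ¬ p ∣ U₁ := by
    intro hdvd
    rw [hU₁] at hdvd
    obtain ⟨x, hx, hpx⟩ := (Prime.dvd_finset_prod_iff hpp.prime _).mp hdvd
    have hxp : x.Prime := (Finset.mem_filter.mp (hs ▸ Finset.mem_of_mem_erase hx)).2.1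
    have : p = x := (Nat.prime_dvd_prime_iff_eq hpp hxp).mp hpx
    exact (Finset.ne_of_mem_erase hx) this.symm
  have hU₁0 : U₁ ≠ 0 := by
    intro h0
    rw [hUsplit, h0, mul_zero] at hUpos
    exact hUpos.false
  -- nondivisibility facts
  have hnd : ∀ {x y : ℤ}, Int.gcd x y = 1 → (p:ℤ) ∣ y → ¬ (p:ℤ) ∣ x := by
    intro x y h hpy hdvd
    have h1 : (p:ℤ) ∣ (Int.gcd x y : ℤ) := Int.natCast_dvd_natCast.mpr (Int.dvd_gcd hdvd hpy)
    rw [h] at h1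
    have h2 : (p:ℤ) ≤ 1 := Int.le_of_dvd one_pos (by exact_mod_cast h1)
    have := hpp.two_le
    omega
  have hpa : ¬ (p:ℤ) ∣ a := hnd haq (Int.natCast_dvd_natCast.mpr hpq)
  have hpr : ¬ (p:ℤ) ∣ r := hnd hrW (Int.natCast_dvd_natCast.mpr (hpW p hpp hpq))
  have hpU₁z : ¬ (p:ℤ) ∣ (U₁:ℤ) := fun h => hpU₁ (Int.natCast_dvd_natCast.mp h)
  have hppz : Prime (p:ℤ) := Nat.prime_iff_prime_int.mp hpp
  rcases eq_or_ne p 2 with hp2 | hp2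
  · -- the case p = 2
    subst hp2
    have hWv : W = 4 * U₁ := by rw [hW, hUsplit]; ring
    have h2Wfact : (2*W).factorization 2 = 3 := by
      have h8 : 2*W = 2^3 * U₁ := by rw [hWv]; ring
      rw [h8, Nat.factorization_mul (by positivity) hU₁0,
        Nat.Prime.factorization_pow Nat.prime_two]
      simp [Nat.factorization_eq_zero_of_not_dvd hpU₁]
    obtain ⟨q₂, hq₂⟩ : 2^4 ∣ q := by
      apply (Nat.Prime.pow_dvd_iff_le_factorization hpp hq0).mpr
      omega
    have hq₂0 : q₂ ≠ 0 := by rintro rfl; simp at hq₂; omega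
    have hq₂z : (q₂:ℤ) ≠ 0 := Int.natCast_ne_zero.mpr hq₂0
    have hqz : (q:ℤ) = 16 * q₂ := by rw [hq₂]; push_cast; ring
    have hWz : (W:ℤ) = 4 * U₁ := by rw [hWv]; push_cast; ring
    apply Vqar_eq_zero_of q W hq a r hgcd q₂
    · exact ⟨2*a*U₁^2, by rw [hqz, hWz]; ring⟩
    · intro hdvd
      have h8ne : (8*(q₂:ℤ)) ≠ 0 := by positivity
      have e1 : (q:ℤ) = (8*(q₂:ℤ))*2 := by rw [hqz]; ring
      have e2 : 2*a*(q₂:ℤ)*W*r + a*(q₂:ℤ)^2*(W:ℤ)^2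
          = (8*(q₂:ℤ)) * (a*(U₁:ℤ)*r + 2*((q₂:ℤ)*a*(U₁:ℤ)^2)) := by
        rw [hWz]; ring
      rw [e1, e2] at hdvd
      have h2dvd : (2:ℤ) ∣ a*(U₁:ℤ)*r + 2*((q₂:ℤ)*a*(U₁:ℤ)^2) :=
        (mul_dvd_mul_iff_left h8ne).mp hdvd
      have h2' : (2:ℤ) ∣ a*(U₁:ℤ)*r :=
        (dvd_add_right (Dvd.intro _ rfl)).mp (by rwa [add_comm] at h2dvd)
      have hcast : ((2:ℕ):ℤ) = (2:ℤ) := by norm_num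
      rcases hppz.dvd_mul.mp (hcast ▸ h2') with h | h
      · rcases hppz.dvd_mul.mp h with h' | h'
        · exact hpa h'
        · exact hpU₁z h'
      · exact hpr h
  · -- the case p odd
    have hp2' : ¬ (p:ℤ) ∣ 2 := by
      intro h
      have h2 : p ∣ 2 := by exact_mod_cast h
      exact hp2 ((Nat.prime_dvd_prime_iff_eq hpp Nat.prime_two).mp h2)
    have hWv : W = p * (2 * U₁) := by rw [hW, hUsplit]; ring
    have h2Wfact : (2*W).factorization p = 1 := by
      have h4 : 2*W = p^1 * (4 * U₁) := by rw [hWv]; ring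
      have hnd4 : ¬ p ∣ 4 * U₁ := by
        intro h
        rcases (Nat.Prime.dvd_mul hpp).mp h with h' | h'
        · have h22 : p ∣ 2^2 := by
            have h4e : (2:ℕ)^2 = 4 := by norm_num
            rw [h4e]; exact h'
          exact hp2' (by exact_mod_cast hpp.dvd_of_dvd_pow h22)
        · exact hpU₁ h'
      rw [h4, Nat.factorization_mul (pow_ne_zero _ hpp.pos.ne') (Nat.mul_ne_zero (by norm_num) hU₁0), hpp.factorization_pow]
      simp [Nat.factorization_eq_zero_of_not_dvd hnd4]
    obtain ⟨q₂, hq₂⟩ : p^2 ∣ q := by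
      apply (Nat.Prime.pow_dvd_iff_le_factorization hpp hq0).mpr
      omega
    have hq₂0 : q₂ ≠ 0 := by
      rintro rfl
      rw [mul_zero] at hq₂
      exact hq0 hq₂
    have hpq₂ne : ((p:ℤ)*(q₂:ℤ)) ≠ 0 := by
      have : (p:ℤ) ≠ 0 := Int.natCast_ne_zero.mpr hpp.pos.ne'
      have h2 : (q₂:ℤ) ≠ 0 := Int.natCast_ne_zero.mpr hq₂0
      exact mul_ne_zero this h2
    have hqz : (q:ℤ) = (p:ℤ)^2 * q₂ := by rw [hq₂]; push_cast; ring
    have hWz : (W:ℤ) = (p:ℤ) * (2 * U₁) := by rw [hWv]; push_cast; ring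
    apply Vqar_eq_zero_of q W hq a r hgcd q₂
    · exact ⟨2*a*(2*(U₁:ℤ))^2, by rw [hqz, hWz]; ring⟩
    · intro hdvd
      have e1 : (q:ℤ) = ((p:ℤ)*(q₂:ℤ))*p := by rw [hqz]; ring
      have e2 : 2*a*(q₂:ℤ)*W*r + a*(q₂:ℤ)^2*(W:ℤ)^2
          = ((p:ℤ)*(q₂:ℤ)) * (2*a*(2*(U₁:ℤ))*r + (p:ℤ)*((q₂:ℤ)*a*(2*(U₁:ℤ))^2)) := by
        rw [hWz]; ring
      rw [e1, e2] at hdvd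
      have hpdvd : (p:ℤ) ∣ 2*a*(2*(U₁:ℤ))*r + (p:ℤ)*((q₂:ℤ)*a*(2*(U₁:ℤ))^2) :=
        (mul_dvd_mul_iff_left hpq₂ne).mp hdvd
      have hp' : (p:ℤ) ∣ 2*a*(2*(U₁:ℤ))*r :=
        (dvd_add_right (Dvd.intro _ rfl)).mp (by rwa [add_comm] at hpdvd)
      rcases hppz.dvd_mul.mp hp' with h | h
      · rcases hppz.dvd_mul.mp h with h' | h'
        · rcases hppz.dvd_mul.mp h' with h'' | h''
          · exact hp2' h''
          · exact hpa h''
        · rcases hppz.dvd_mul.mp h' with h'' | h''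
          · exact hp2' h''
          · exact hpU₁z h''
      · exact hpr h
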